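/- Let f, g : 2^E → ℝ≥0 be monotone set functions and A, B ⊆ E disjoint. Suppose γ_f, γ_g ∈ [0,1] satisfy Σ_{e∈B} f_A(e) ≥ γ_f · f_A(B) and Σ_{e∈B} g_A(e) ≥ γ_g · g_A(B), with γ_f ≥ γ_g, and f(A ∪ B) > 0. Then the product h(S) = f(S)·g(S) satisfies Σ_{e∈B} h_A(e) ≥ (f(A)/f(A∪B)) · γ_g · h_A(B), where h_A(T) = h(A ∪ T) − h(A). -/
import Mathlib


open Finset

theorem stmt_5 {E : Type*} [Fintype E] [DecidableEq E]
    (f g : Finset E → ℝ)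
    (hfnn : ∀ S, 0 ≤ f S) (hgnn : ∀ S, 0 ≤ g S)
    (hfmono : ∀ S T : Finset E, S ⊆ T → f S ≤ f T)
    (hgmono : ∀ S T : Finset E, S ⊆ T → g S ≤ g T)
    (A B : Finset E) (hAB : Disjoint A B)
    (γf γg : ℝ) (hγf0 : 0 ≤ γf) (hγf1 : γf ≤ 1) (hγg0 : 0 ≤ γg) (hγg1 : γg ≤ 1)
    (hγ : γf ≥ γg)
    (hwf : ∑ e ∈ B, (f (insert e A) - f A) ≥ γf * (f (A ∪ B) - f A))
    (hwg : ∑ e ∈ B, (g (insert e A) - g A) ≥ γg * (g (A ∪ B) - g A))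
    (hpos : 0 < f (A ∪ B))
    (h : Finset E → ℝ) (hh : ∀ S, h S = f S * g S) :
    ∑ e ∈ B, (h (insert e A) - h A) ≥
      (f A / f (A ∪ B)) * γg * (h (A ∪ B) - h A) := by
  have key : ∑ e ∈ B, (h (insert e A) - h A) ≥
      f A * ∑ e ∈ B, (g (insert e A) - g A) + g A * ∑ e ∈ B, (f (insert e A) - f A) := by
    rw [Finset.mul_sum, Finset.mul_sum, ← Finset.sum_add_distrib]
    apply Finset.sum_le_sum
    intro e he
    have h1 : f A ≤ f (insert e A) := hfmono _ _ (subset_insert e A)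
    have h2 : g A ≤ g (insert e A) := hgmono _ _ (subset_insert e A)
    rw [hh, hh]
    nlinarith [mul_nonneg (sub_nonneg.2 h1) (sub_nonneg.2 h2)]
  have hfAB : f A ≤ f (A ∪ B) := hfmono _ _ Finset.subset_union_left
  have hgAB : g A ≤ g (A ∪ B) := hgmono _ _ Finset.subset_union_left
  have hSf : ∑ e ∈ B, (f (insert e A) - f A) ≥ γg * (f (A ∪ B) - f A) :=
    le_trans (mul_le_mul_of_nonneg_right hγ (sub_nonneg.2 hfAB)) hwf
  have hSg : ∑ e ∈ B, (g (insert e A) - g A) ≥ γg * (g (A ∪ B) - g A) := hwg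
  have hmain : ∑ e ∈ B, (h (insert e A) - h A) ≥
      f A * (γg * (g (A ∪ B) - g A)) + g A * (γg * (f (A ∪ B) - f A)) := by
    have := mul_le_mul_of_nonneg_left hSg (hfnn A)
    have := mul_le_mul_of_nonneg_left hSf (hgnn A)
    linarith
  rw [ge_iff_le, div_mul_eq_mul_div, div_mul_eq_mul_div, div_le_iff₀ hpos]
  rw [hh, hh] at *
  nlinarith [mul_nonneg (mul_nonneg hγg0 (hgnn A)) (sq_nonneg (f (A ∪ B) - f A)),
    mul_le_mul_of_nonneg_right hmain (le_of_lt hpos)]
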